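/- arXiv:1804.02856 — 3 statements merged into one kernel-verified Lean document; each statement's English description precedes it below -/
import Mathlib

section
/- Suppose sequences (x_n), (y_n), (a_n²), (b_n) of differentiable functions of c ∈ (0,1) satisfy b_n(c) = x_n(c) + (n+(n+α+β)c-γ)/(1-c) and ((1-c)/c)a_n²(c) = y_n(c) + Σ_{k=0}^{n-1} x_k(c) + n(n+α+β-γ-1)/(1-c), together with the Toda equations c·(a_n²)' = a_n²(b_n - b_{n-1}) for n ≥ 1 and c·b_n' = a_{n+1}² - a_n² for n ≥ 0, and a_0² = 0. Then (1-c)x_n' = y_{n+1} - y_n + x_n for all n ≥ 0. -/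
open Set

/-- Proposition 5.1, eq. (5.5): the Toda equation for x_n. -/
theorem toda_for_x (α β γ : ℝ) (x y a2 b : ℕ → ℝ → ℝ)
    (hdx : ∀ n, ∀ c ∈ Ioo (0:ℝ) 1, DifferentiableAt ℝ (x n) c)
    (hdy : ∀ n, ∀ c ∈ Ioo (0:ℝ) 1, DifferentiableAt ℝ (y n) c)
    (hda : ∀ n, ∀ c ∈ Ioo (0:ℝ) 1, DifferentiableAt ℝ (a2 n) c)
    (hdb : ∀ n, ∀ c ∈ Ioo (0:ℝ) 1, DifferentiableAt ℝ (b n) c)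
    (hb : ∀ n : ℕ, ∀ c ∈ Ioo (0:ℝ) 1,
      b n c = x n c + ((n : ℝ) + ((n : ℝ) + α + β) * c - γ) / (1 - c))
    (ha : ∀ n : ℕ, ∀ c ∈ Ioo (0:ℝ) 1,
      (1 - c) / c * a2 n c = y n c + (∑ k ∈ Finset.range n, x k c)
        + (n : ℝ) * ((n : ℝ) + α + β - γ - 1) / (1 - c))
    (hToda1 : ∀ n : ℕ, 1 ≤ n → ∀ c ∈ Ioo (0:ℝ) 1,
      c * deriv (a2 n) c = a2 n c * (b n c - b (n - 1) c))
    (hToda2 : ∀ n : ℕ, ∀ c ∈ Ioo (0:ℝ) 1,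
      c * deriv (b n) c = a2 (n + 1) c - a2 n c)
    (ha0 : ∀ c ∈ Ioo (0:ℝ) 1, a2 0 c = 0) :
    ∀ n : ℕ, ∀ c ∈ Ioo (0:ℝ) 1,
      (1 - c) * deriv (x n) c = y (n + 1) c - y n c + x n c := by
  intro n c hc
  obtain ⟨hc0, hc1⟩ := hc
  have hcne : c ≠ 0 := ne_of_gt hc0
  have h1c : (1 : ℝ) - c ≠ 0 := ne_of_gt (by linarith)
  have hmem : Ioo (0:ℝ) 1 ∈ nhds c := isOpen_Ioo.mem_nhds ⟨hc0, hc1⟩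
  -- derivative of the rational part
  have h1 : HasDerivAt (fun t : ℝ => (n:ℝ) + ((n:ℝ)+α+β)*t - γ) ((n:ℝ)+α+β) c := by
    simpa using (((hasDerivAt_id c).const_mul ((n:ℝ)+α+β)).const_add (n:ℝ)).sub_const γ
  have h2 : HasDerivAt (fun t : ℝ => 1 - t) (-1) c := by
    simpa using (hasDerivAt_id c).const_sub 1
  have hg := h1.div h2 h1c
  have heq : b n =ᶠ[nhds c] fun t => x n t + ((n:ℝ) + ((n:ℝ)+α+β)*t - γ)/(1 - t) :=
    Filter.eventually_of_mem hmem (fun t ht => hb n t ht)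
  have hxb : HasDerivAt (b n)
      (deriv (x n) c + (((n:ℝ)+α+β)*(1-c) - ((n:ℝ) + ((n:ℝ)+α+β)*c - γ)*(-1))/(1-c)^2) c :=
    (((hdx n c ⟨hc0, hc1⟩).hasDerivAt.add hg).congr_of_eventuallyEq heq)
  have hT := hToda2 n c ⟨hc0, hc1⟩
  rw [hxb.deriv] at hT
  have hA1 := ha (n+1) c ⟨hc0, hc1⟩
  have hA0 := ha n c ⟨hc0, hc1⟩
  rw [Finset.sum_range_succ] at hA1
  push_cast at hA1
  field_simp at hT hA1 hA0 ⊢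
  have key : c*(1-c) * ((1-c) * deriv (x n) c) = c*(1-c) * (y (n+1) c - y n c + x n c) := by
    linear_combination hT + hA1 - hA0
  exact mul_left_cancel₀ (mul_ne_zero hcne h1c) (by rw [mul_comm (deriv (x n) c)]; exact key)
end

section
/- Under the same hypotheses (relations (3.4), (3.8) between (x_n, y_n) and (a_n², b_n), the Toda equations c(a_n²)' = a_n²(b_n - b_{n-1}), c b_n' = a_{n+1}² - a_n², and a_0² = 0), the derivative of y_n satisfies (1-c)y_n' = ((1-c)²/c²)·a_n²·(x_n - x_{n-1}) for all n ≥ 1. -/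
open Set

lemma gauss_sum_aux (α β γ : ℝ) : ∀ N : ℕ,
    ∑ k ∈ Finset.range N, (2*(k:ℝ)+α+β-γ) = (N:ℝ)*((N:ℝ)+α+β-γ-1) := by
  intro N
  induction N with
  | zero => simp
  | succ p ih =>
    rw [Finset.sum_range_succ, ih]
    push_cast
    ring

/-- Proposition 5.1, eq. (5.6): the Toda equation for y_n. -/
theorem toda_for_y (α β γ : ℝ) (x y a2 b : ℕ → ℝ → ℝ)
    (hdx : ∀ n, ∀ c ∈ Ioo (0:ℝ) 1, DifferentiableAt ℝ (x n) c)
    (hdy : ∀ n, ∀ c ∈ Ioo (0:ℝ) 1, DifferentiableAt ℝ (y n) c)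
    (hda : ∀ n, ∀ c ∈ Ioo (0:ℝ) 1, DifferentiableAt ℝ (a2 n) c)
    (hdb : ∀ n, ∀ c ∈ Ioo (0:ℝ) 1, DifferentiableAt ℝ (b n) c)
    (hb : ∀ n : ℕ, ∀ c ∈ Ioo (0:ℝ) 1,
      b n c = x n c + ((n : ℝ) + ((n : ℝ) + α + β) * c - γ) / (1 - c))
    (ha : ∀ n : ℕ, ∀ c ∈ Ioo (0:ℝ) 1,
      (1 - c) / c * a2 n c = y n c + (∑ k ∈ Finset.range n, x k c)
        + (n : ℝ) * ((n : ℝ) + α + β - γ - 1) / (1 - c))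
    (hToda1 : ∀ n : ℕ, 1 ≤ n → ∀ c ∈ Ioo (0:ℝ) 1,
      c * deriv (a2 n) c = a2 n c * (b n c - b (n - 1) c))
    (hToda2 : ∀ n : ℕ, ∀ c ∈ Ioo (0:ℝ) 1,
      c * deriv (b n) c = a2 (n + 1) c - a2 n c)
    (ha0 : ∀ c ∈ Ioo (0:ℝ) 1, a2 0 c = 0) :
    ∀ n : ℕ, 1 ≤ n → ∀ c ∈ Ioo (0:ℝ) 1,
      (1 - c) * deriv (y n) c = (1 - c) ^ 2 / c ^ 2 * a2 n c * (x n c - x (n - 1) c) := by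
  intro n hn c hc
  obtain ⟨m, rfl⟩ : ∃ m, n = m + 1 := ⟨n - 1, (Nat.succ_pred_eq_of_pos hn).symm⟩
  obtain ⟨hc0, hc1⟩ := hc
  have hc0' : c ≠ 0 := ne_of_gt hc0
  have h1c : (1:ℝ) - c ≠ 0 := ne_of_gt (sub_pos.mpr hc1)
  have hcmem : c ∈ Ioo (0:ℝ) 1 := ⟨hc0, hc1⟩
  have hnhds : ∀ᶠ c' in nhds c, c' ∈ Ioo (0:ℝ) 1 :=
    Filter.eventually_of_mem (isOpen_Ioo.mem_nhds hcmem) (fun _ h => h)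
  -- derivative of b k in terms of derivative of x k
  have hderivb : ∀ k : ℕ, deriv (b k) c = deriv (x k) c + (2*(k:ℝ)+α+β-γ)/(1-c)^2 := by
    intro k
    have heq : b k =ᶠ[nhds c] fun c' => x k c' + ((k:ℝ)+((k:ℝ)+α+β)*c'-γ)/(1-c') :=
      hnhds.mono (fun c' hc' => hb k c' hc')
    rw [heq.deriv_eq]
    have hnum : HasDerivAt (fun c' : ℝ => (k:ℝ)+((k:ℝ)+α+β)*c'-γ) ((k:ℝ)+α+β) c := by
      have := (((hasDerivAt_id c).const_mul ((k:ℝ)+α+β)).const_add (k:ℝ)).sub_const γ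
      simpa using this
    have hden : HasDerivAt (fun c' : ℝ => 1 - c') (-1:ℝ) c := by
      simpa using (hasDerivAt_const c (1:ℝ)).fun_sub (hasDerivAt_id c)
    have h2 : HasDerivAt (fun c' => ((k:ℝ)+((k:ℝ)+α+β)*c'-γ)/(1-c'))
        ((2*(k:ℝ)+α+β-γ)/(1-c)^2) c := by
      have := hnum.fun_div hden h1c
      refine this.congr_deriv ?_
      ring
    rw [deriv_fun_add (hdx k c hcmem) h2.differentiableAt, h2.deriv]
  -- c * deriv (x k) c
  have hck : ∀ k : ℕ, c * deriv (x k) c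
      = (a2 (k+1) c - a2 k c) - c*(2*(k:ℝ)+α+β-γ)/(1-c)^2 := by
    intro k
    have h := hToda2 k c hcmem
    rw [hderivb k] at h
    linear_combination h
  -- sum of derivatives of x
  have hS : c * (∑ k ∈ Finset.range (m+1), deriv (x k) c)
      = a2 (m+1) c - c*((↑(m+1) : ℝ)*((↑(m+1) : ℝ)+α+β-γ-1))/(1-c)^2 := by
    rw [Finset.mul_sum]
    rw [Finset.sum_congr rfl (fun k _ => hck k), Finset.sum_sub_distrib,
      Finset.sum_range_sub (fun k => a2 k c), ha0 c hcmem]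
    have hσ : ∑ k ∈ Finset.range (m+1), c*(2*(k:ℝ)+α+β-γ)/(1-c)^2
        = c*((↑(m+1) : ℝ)*((↑(m+1) : ℝ)+α+β-γ-1))/(1-c)^2 := by
      rw [← Finset.sum_div, ← Finset.mul_sum, gauss_sum_aux α β γ (m+1)]
    rw [hσ]
    ring
  -- compute deriv (y (m+1)) c
  have heqy : y (m+1) =ᶠ[nhds c] fun c' => (1-c')/c' * a2 (m+1) c'
      - (∑ k ∈ Finset.range (m+1), x k c')
      - (↑(m+1) : ℝ) * ((↑(m+1) : ℝ)+α+β-γ-1)/(1-c') :=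
    hnhds.mono (fun c' hc' => by have := ha (m+1) c' hc'; linarith)
  have hA1 : HasDerivAt (fun c' : ℝ => (1-c')/c') (-(1/c^2)) c := by
    have := ((hasDerivAt_const c (1:ℝ)).fun_sub (hasDerivAt_id' c)).fun_div (hasDerivAt_id' c) hc0'
    refine this.congr_deriv ?_
    field_simp
    ring
  have hA : HasDerivAt (fun c' => (1-c')/c' * a2 (m+1) c')
      (-(1/c^2) * a2 (m+1) c + (1-c)/c * deriv (a2 (m+1)) c) c :=
    hA1.mul (hda (m+1) c hcmem).hasDerivAt
  have hS' : HasDerivAt (fun c' => ∑ k ∈ Finset.range (m+1), x k c')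
      (∑ k ∈ Finset.range (m+1), deriv (x k) c) c :=
    HasDerivAt.fun_sum (fun k _ => (hdx k c hcmem).hasDerivAt)
  have hden : HasDerivAt (fun c' : ℝ => 1 - c') (-1:ℝ) c := by
    simpa using (hasDerivAt_const c (1:ℝ)).fun_sub (hasDerivAt_id c)
  have hKd : HasDerivAt (fun c' : ℝ => (↑(m+1) : ℝ) * ((↑(m+1) : ℝ)+α+β-γ-1)/(1-c'))
      ((↑(m+1) : ℝ) * ((↑(m+1) : ℝ)+α+β-γ-1)/(1-c)^2) c := by
    have := (hasDerivAt_const c ((↑(m+1) : ℝ) * ((↑(m+1) : ℝ)+α+β-γ-1))).fun_div hden h1c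
    refine this.congr_deriv ?_
    ring
  have hF := (hA.sub hS').sub hKd
  have hyderiv : deriv (y (m+1)) c
      = -(1/c^2) * a2 (m+1) c + (1-c)/c * deriv (a2 (m+1)) c
        - (∑ k ∈ Finset.range (m+1), deriv (x k) c)
        - (↑(m+1) : ℝ) * ((↑(m+1) : ℝ)+α+β-γ-1)/(1-c)^2 := by
    rw [heqy.deriv_eq]
    exact hF.deriv
  -- Toda1 in terms of x
  have hbd : b (m+1) c - b m c = x (m+1) c - x m c + (1+c)/(1-c) := by
    rw [hb (m+1) c hcmem, hb m c hcmem]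
    push_cast
    field_simp
    ring
  have hT1 : c * deriv (a2 (m+1)) c
      = a2 (m+1) c * (x (m+1) c - x m c + (1+c)/(1-c)) := by
    have h := hToda1 (m+1) (by omega) c hcmem
    simp only [Nat.add_sub_cancel] at h
    rw [h, hbd]
  have ha2' : deriv (a2 (m+1)) c
      = a2 (m+1) c * (x (m+1) c - x m c + (1+c)/(1-c)) / c := by
    rw [eq_div_iff hc0', ← hT1]
    ring
  have hSval : ∑ k ∈ Finset.range (m+1), deriv (x k) c
      = (a2 (m+1) c - c*((↑(m+1) : ℝ)*((↑(m+1) : ℝ)+α+β-γ-1))/(1-c)^2) / c := by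
    rw [eq_div_iff hc0', ← hS]
    ring
  simp only [Nat.add_sub_cancel]
  rw [hyderiv, ha2', hSval]
  field_simp
  ring
end

section
/- For the Meixner case: the sequences a_n² = n(n+β-1)c/(1-c)² and b_n = (n+(n+β)c)/(1-c) satisfy the Toda equations c·(d/dc)(a_n²) = a_n²(b_n - b_{n-1}) for n ≥ 1 and c·(d/dc)(b_n) = a_{n+1}² - a_n² for n ≥ 0. -/
open Set

/-- the Meixner recurrence coefficients satisfy the Toda equations. -/
theorem meixner_toda (β : ℝ) (hβ : 0 < β) :
    let a2 : ℕ → ℝ → ℝ := fun n c => (n : ℝ) * ((n : ℝ) + β - 1) * c / (1 - c) ^ 2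
    let b : ℕ → ℝ → ℝ := fun n c => ((n : ℝ) + ((n : ℝ) + β) * c) / (1 - c)
    (∀ n : ℕ, 1 ≤ n → ∀ c ∈ Ioo (0:ℝ) 1,
        c * deriv (a2 n) c = a2 n c * (b n c - b (n - 1) c)) ∧
    (∀ n : ℕ, ∀ c ∈ Ioo (0:ℝ) 1,
        c * deriv (b n) c = a2 (n + 1) c - a2 n c) := by
  intro a2 b
  constructor
  · intro n hn c hc
    obtain ⟨hc0, hc1⟩ := hc
    have hcne : (1 : ℝ) - c ≠ 0 := by linarith
    set K : ℝ := (n : ℝ) * ((n : ℝ) + β - 1) with hK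
    have hnum : HasDerivAt (fun c : ℝ => K * c) K c := by
      simpa using (hasDerivAt_id c).const_mul K
    have hden : HasDerivAt (fun c : ℝ => (1 - c) ^ 2)
        (2 * (1 - c) ^ 1 * (0 - 1)) c :=
      (((hasDerivAt_const c (1:ℝ)).sub (hasDerivAt_id c)).pow 2)
    have h : HasDerivAt (a2 n)
        ((K * (1 - c) ^ 2 - K * c * (2 * (1 - c) ^ 1 * (0 - 1))) / ((1 - c) ^ 2) ^ 2) c :=
      hnum.div hden (pow_ne_zero 2 hcne)
    rw [h.deriv]
    have hcast : ((n - 1 : ℕ) : ℝ) = (n : ℝ) - 1 := by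
      push_cast [Nat.cast_sub hn]; ring
    simp only [a2, b, hcast]
    field_simp
    ring
  · intro n c hc
    obtain ⟨hc0, hc1⟩ := hc
    have hcne : (1 : ℝ) - c ≠ 0 := by linarith
    have hnum : HasDerivAt (fun c : ℝ => (n : ℝ) + ((n : ℝ) + β) * c)
        (0 + ((n : ℝ) + β) * 1) c :=
      (hasDerivAt_const c ((n : ℝ))).add (((hasDerivAt_id c).const_mul ((n : ℝ) + β)))
    have hden : HasDerivAt (fun c : ℝ => 1 - c) (0 - 1) c :=
      (hasDerivAt_const c (1:ℝ)).sub (hasDerivAt_id c)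
    have h : HasDerivAt (b n)
        (((0 + ((n : ℝ) + β) * 1) * (1 - c) - ((n : ℝ) + ((n : ℝ) + β) * c) * (0 - 1))
          / (1 - c) ^ 2) c :=
      hnum.div hden hcne
    rw [h.deriv]
    simp only [a2, b]
    push_cast
    field_simp
    ring
end
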